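/- For Lebesgue almost every x ∈ [0,1), limsup_{n→∞} (log a_n(x)) / (log n) = 1. -/

import Mathlib

open Filter MeasureTheory

/-- The Gauss map. -/
noncomputable def gaussMap (x : ℝ) : ℝ := Int.fract x⁻¹

/-- The n-th partial quotient (n ≥ 1) of the continued fraction expansion. -/
noncomputable def cfDigit (x : ℝ) (n : ℕ) : ℕ := ⌊(gaussMap^[n - 1] x)⁻¹⌋₊

/-- x is irrational and in (0,1). -/
def IrrI (x : ℝ) : Prop := Irrational x ∧ 0 < x ∧ x < 1

lemma irrI_gauss {x : ℝ} (hx : IrrI x) : IrrI (gaussMap x) := by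
  obtain ⟨hirr, h0, h1⟩ := hx
  have hinv : Irrational x⁻¹ := hirr.inv
  have hfr : Irrational (Int.fract x⁻¹) := by
    rw [Int.fract]
    exact hinv.sub_intCast _
  refine ⟨hfr, ?_, Int.fract_lt_one _⟩
  rcases lt_or_eq_of_le (Int.fract_nonneg x⁻¹) with h | h
  · exact h
  · exact absurd h.symm (by simpa using hfr.ne_rat 0)

lemma irrI_gauss_iter {x : ℝ} (hx : IrrI x) (n : ℕ) : IrrI (gaussMap^[n] x) := by
  induction n with
  | zero => exact hx
  | succ n ih => rw [Function.iterate_succ_apply']; exact irrI_gauss ih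

lemma one_lt_inv_of_irrI {x : ℝ} (hx : IrrI x) : 1 < x⁻¹ :=
  (one_lt_inv₀ hx.2.1).mpr hx.2.2

lemma cfDigit_pos {x : ℝ} (hx : IrrI x) (n : ℕ) : 1 ≤ cfDigit x n := by
  have := one_lt_inv_of_irrI (irrI_gauss_iter hx (n-1))
  exact Nat.le_floor (by exact_mod_cast this.le)

lemma cfDigit_cast {x : ℝ} (hx : IrrI x) (n : ℕ) :
    (cfDigit x n : ℝ) = ⌊(gaussMap^[n-1] x)⁻¹⌋ := by
  have h := (one_lt_inv_of_irrI (irrI_gauss_iter hx (n-1))).le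
  have h0 : (0:ℤ) ≤ ⌊(gaussMap^[n-1] x)⁻¹⌋ :=
    Int.le_floor.mpr (by simpa using le_trans zero_le_one h)
  rw [cfDigit, ← Int.floor_toNat]
  exact_mod_cast Int.toNat_of_nonneg h0

/-- the fundamental relation x = 1/(a₁ + T x). -/
lemma self_eq_inv_digit_add_gauss {x : ℝ} (hx : IrrI x) :
    x = ((cfDigit x 1 : ℝ) + gaussMap x)⁻¹ := by
  have h1 : (cfDigit x 1 : ℝ) = ⌊x⁻¹⌋ := by simpa using cfDigit_cast hx 1
  have : (cfDigit x 1 : ℝ) + gaussMap x = x⁻¹ := by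
    rw [h1, gaussMap, Int.fract]; ring
  rw [this, inv_inv]

/-- converse: building a point with prescribed first digit. -/
lemma build_step {y : ℝ} (hy : IrrI y) {a : ℕ} (ha : 1 ≤ a) :
    IrrI ((a + y)⁻¹) ∧ gaussMap ((a + y)⁻¹) = y ∧ cfDigit ((a + y)⁻¹) 1 = a := by
  have h1 : (1 : ℝ) ≤ a := by exact_mod_cast ha
  have hpos : (0:ℝ) < a + y := by linarith [hy.2.1]
  have hgt1 : (1:ℝ) < a + y := by linarith [hy.2.1]
  have hirr : Irrational (a + y) := hy.1.natCast_add a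
  have hIrrI : IrrI ((a + y)⁻¹) := by
    refine ⟨hirr.inv, by positivity, ?_⟩
    rw [inv_lt_one_iff₀]; right; exact hgt1
  have hinvinv : ((a + y)⁻¹)⁻¹ = a + y := inv_inv _
  have hg : gaussMap ((a + y)⁻¹) = y := by
    rw [gaussMap, hinvinv]
    rw [show (a:ℝ) + y = y + (a:ℤ) by push_cast; ring, Int.fract_add_intCast, Int.fract_eq_self.mpr ⟨hy.2.1.le, hy.2.2⟩]
  refine ⟨hIrrI, hg, ?_⟩
  show ⌊((a + y)⁻¹)⁻¹⌋₊ = a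
  rw [hinvinv]
  rw [show (a:ℝ) + y = y + a by ring, Nat.floor_add_natCast hy.2.1.le, Nat.floor_eq_zero.mpr hy.2.2, zero_add]

/-- continuant data (p, q, p', q') for the Möbius map t ↦ (p + p' t)/(q + q' t). -/
def cfData : List ℕ → ℕ × ℕ × ℕ × ℕ
  | [] => (0, 1, 1, 0)
  | a :: w =>
    let d := cfData w
    (d.2.1, a * d.2.1 + d.1, d.2.2.2, a * d.2.2.2 + d.2.2.1)

def cfP (w : List ℕ) : ℕ := (cfData w).1
def cfQ (w : List ℕ) : ℕ := (cfData w).2.1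
def cfP' (w : List ℕ) : ℕ := (cfData w).2.2.1
def cfQ' (w : List ℕ) : ℕ := (cfData w).2.2.2

@[simp] lemma cfP_nil : cfP [] = 0 := rfl
@[simp] lemma cfQ_nil : cfQ [] = 1 := rfl
@[simp] lemma cfP'_nil : cfP' [] = 1 := rfl
@[simp] lemma cfQ'_nil : cfQ' [] = 0 := rfl
lemma cfP_cons (a : ℕ) (w : List ℕ) : cfP (a :: w) = cfQ w := rfl
lemma cfQ_cons (a : ℕ) (w : List ℕ) : cfQ (a :: w) = a * cfQ w + cfP w := rfl
lemma cfP'_cons (a : ℕ) (w : List ℕ) : cfP' (a :: w) = cfQ' w := rfl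
lemma cfQ'_cons (a : ℕ) (w : List ℕ) : cfQ' (a :: w) = a * cfQ' w + cfP' w := rfl

/-- the invariant. -/
lemma cf_invariant {w : List ℕ} (hw : ∀ a ∈ w, 1 ≤ a) :
    1 ≤ cfQ w ∧ cfQ' w ≤ cfQ w ∧ cfP' w + cfQ' w ≤ cfP w + cfQ w := by
  induction w with
  | nil => simp
  | cons a w ih =>
    have ha : 1 ≤ a := hw a List.mem_cons_self
    obtain ⟨h1, h2, h3⟩ := ih (fun b hb => hw b (List.mem_cons_of_mem a hb))
    rw [cfP_cons, cfQ_cons, cfP'_cons, cfQ'_cons]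
    have e1 : (a-1) * cfQ' w ≤ (a-1) * cfQ w := Nat.mul_le_mul_left _ h2
    have e5 : cfQ' w ≤ a * cfQ' w := Nat.le_mul_of_pos_left _ (by omega)
    have e6 : cfQ w ≤ a * cfQ w := Nat.le_mul_of_pos_left _ (by omega)
    have e7 : (a-1) * cfQ' w = a * cfQ' w - cfQ' w := by rw [Nat.sub_one_mul]
    have e8 : (a-1) * cfQ w = a * cfQ w - cfQ w := by rw [Nat.sub_one_mul]
    refine ⟨by omega, by omega, by omega⟩

/-- determinant. -/
lemma cf_det (w : List ℕ) :
    (cfP' w : ℤ) * cfQ w - cfP w * cfQ' w = (-1) ^ w.length := by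
  induction w with
  | nil => simp
  | cons a w ih =>
    rw [cfP_cons, cfQ_cons, cfP'_cons, cfQ'_cons]
    push_cast
    push_cast at ih
    rw [List.length_cons, pow_succ]
    ring_nf
    ring_nf at ih
    linarith [ih]

noncomputable def psiFun (w : List ℕ) (t : ℝ) : ℝ :=
  ((cfP w : ℝ) + cfP' w * t) / ((cfQ w : ℝ) + cfQ' w * t)

lemma psi_nil (t : ℝ) : psiFun [] t = t := by simp [psiFun]

lemma cf_denom_pos {w : List ℕ} (hw : ∀ a ∈ w, 1 ≤ a) {t : ℝ} (ht : 0 ≤ t) :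
    0 < (cfQ w : ℝ) + cfQ' w * t := by
  obtain ⟨h1, -, -⟩ := cf_invariant hw
  have : (1:ℝ) ≤ cfQ w := by exact_mod_cast h1
  positivity

lemma psi_nonneg {w : List ℕ} (hw : ∀ a ∈ w, 1 ≤ a) {t : ℝ} (ht : 0 ≤ t) :
    0 ≤ psiFun w t :=
  div_nonneg (by positivity) (cf_denom_pos hw ht).le

lemma psi_cons {w : List ℕ} (hw : ∀ a ∈ w, 1 ≤ a) (a : ℕ) {t : ℝ} (ht : 0 ≤ t) :
    psiFun (a :: w) t = ((a : ℝ) + psiFun w t)⁻¹ := by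
  have hd := (cf_denom_pos hw ht).ne'
  have key : (a:ℝ) + psiFun w t
      = ((a * cfQ w + cfP w : ℕ) + ((a * cfQ' w + cfP' w : ℕ):ℝ)*t)/((cfQ w:ℝ) + cfQ' w * t) := by
    rw [psiFun]; push_cast; rw [eq_div_iff hd, add_mul, div_mul_cancel₀ _ hd]; ring
  rw [psiFun, cfP_cons, cfQ_cons, cfP'_cons, cfQ'_cons, key, inv_div]

noncomputable def digitWord (x : ℝ) : ℕ → List ℕ
  | 0 => []
  | n+1 => cfDigit x 1 :: digitWord (gaussMap x) n

lemma cfDigit_shift (x : ℝ) (m : ℕ) : cfDigit (gaussMap x) (m+1) = cfDigit x (m+2) := by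
  simp only [cfDigit, Nat.add_sub_cancel]
  rw [← Function.iterate_succ_apply]
  norm_num

/-- D2 : points built from a word have that word as digit prefix. -/
lemma D2 {w : List ℕ} (hw : ∀ a ∈ w, 1 ≤ a) {y : ℝ} (hy : IrrI y) :
    IrrI (psiFun w y) ∧ gaussMap^[w.length] (psiFun w y) = y ∧
      digitWord (psiFun w y) w.length = w := by
  induction w with
  | nil => exact ⟨by simpa [psi_nil] using hy, by simp [psi_nil], rfl⟩
  | cons a w ih =>
    have ha : 1 ≤ a := hw a List.mem_cons_self
    have hw' : ∀ b ∈ w, 1 ≤ b := fun b hb => hw b (List.mem_cons_of_mem a hb)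
    obtain ⟨h1, h2, h3⟩ := ih hw'
    have hψ : psiFun (a :: w) y = ((a:ℝ) + psiFun w y)⁻¹ := psi_cons hw' a hy.2.1.le
    obtain ⟨b1, b2, b3⟩ := build_step h1 ha
    rw [hψ]
    refine ⟨b1, ?_, ?_⟩
    · rw [List.length_cons, Function.iterate_succ_apply, b2, h2]
    · rw [List.length_cons]
      show cfDigit _ 1 :: digitWord (gaussMap ((↑a + psiFun w y)⁻¹)) w.length = a :: w
      rw [b2, b3, h3]

/-- D3 : every irrational point is built from its digit word. -/
lemma D3 {x : ℝ} (hx : IrrI x) (n : ℕ) :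
    (digitWord x n).length = n ∧ (∀ a ∈ digitWord x n, 1 ≤ a) ∧
      psiFun (digitWord x n) (gaussMap^[n] x) = x := by
  induction n generalizing x with
  | zero => exact ⟨rfl, by simp [digitWord], psi_nil x⟩
  | succ n ih =>
    obtain ⟨l1, l2, l3⟩ := ih (irrI_gauss hx)
    have hmem : ∀ a ∈ digitWord x (n+1), 1 ≤ a := by
      intro a hadd
      rw [show digitWord x (n+1) = cfDigit x 1 :: digitWord (gaussMap x) n from rfl] at hadd
      rcases List.mem_cons.mp hadd with h | h
      · subst h; exact cfDigit_pos hx 1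
      · exact l2 a h
    refine ⟨by simp [digitWord, l1], hmem, ?_⟩
    show psiFun (cfDigit x 1 :: digitWord (gaussMap x) n) (gaussMap^[n+1] x) = x
    rw [psi_cons l2 _ ?pos]
    · rw [Function.iterate_succ_apply, l3]
      exact (self_eq_inv_digit_add_gauss hx).symm
    case pos => exact ((irrI_gauss_iter hx (n+1)).2.1).le |>.trans_eq (by rw [Function.iterate_succ_apply])

lemma digitWord_getD {x : ℝ} {n i : ℕ} (h : i < n) :
    (digitWord x n).getD i 0 = cfDigit x (i+1) := by
  induction n generalizing x i with
  | zero => omega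
  | succ n ih =>
    show (cfDigit x 1 :: digitWord (gaussMap x) n).getD i 0 = _
    cases i with
    | zero => rfl
    | succ i =>
      show (digitWord (gaussMap x) n).getD i 0 = _
      rw [ih (by omega), cfDigit_shift]

/-- the key difference identity. -/
lemma psi_sub {w : List ℕ} (hw : ∀ a ∈ w, 1 ≤ a) {u v : ℝ} (hu : 0 ≤ u) (hv : 0 ≤ v) :
    psiFun w u - psiFun w v
      = ((-1:ℝ)^w.length * (u - v))
        / (((cfQ w:ℝ) + cfQ' w * u) * ((cfQ w:ℝ) + cfQ' w * v)) := by
  have du := (cf_denom_pos hw hu).ne'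
  have dv := (cf_denom_pos hw hv).ne'
  have hdet : (cfP' w:ℝ) * cfQ w - cfP w * cfQ' w = (-1:ℝ)^w.length := by
    exact_mod_cast congrArg (fun z : ℤ => (z:ℝ)) (cf_det w)
  rw [psiFun, psiFun, div_sub_div _ _ du dv]
  congr 1
  linear_combination (u - v) * hdet

lemma psi_abs_sub {w : List ℕ} (hw : ∀ a ∈ w, 1 ≤ a) {u v : ℝ} (hu : 0 ≤ u) (hv : 0 ≤ v) :
    |psiFun w u - psiFun w v|
      = |u - v| / (((cfQ w:ℝ) + cfQ' w * u) * ((cfQ w:ℝ) + cfQ' w * v)) := by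
  rw [psi_sub hw hu hv, abs_div, abs_mul, abs_pow, abs_neg, abs_one, one_pow, one_mul,
    abs_of_pos (mul_pos (cf_denom_pos hw hu) (cf_denom_pos hw hv))]

lemma psi_mem_uIoo {w : List ℕ} (hw : ∀ a ∈ w, 1 ≤ a) {α y β : ℝ} (hα : 0 ≤ α)
    (h1 : α < y) (h2 : y < β) :
    psiFun w y ∈ Set.uIoo (psiFun w α) (psiFun w β) := by
  have hy : 0 ≤ y := le_trans hα h1.le
  have hβ : 0 ≤ β := le_trans hy h2.le
  rcases Nat.even_or_odd w.length with he | ho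
  · have hs : ((-1:ℝ))^w.length = 1 := he.neg_one_pow
    have i1 : psiFun w α < psiFun w y := by
      have := psi_sub hw hy hα
      rw [hs, one_mul] at this
      have hpos : 0 < (y - α) / (((cfQ w:ℝ) + cfQ' w * y) * ((cfQ w:ℝ) + cfQ' w * α)) :=
        div_pos (by linarith) (mul_pos (cf_denom_pos hw hy) (cf_denom_pos hw hα))
      linarith [this]
    have i2 : psiFun w y < psiFun w β := by
      have := psi_sub hw hβ hy
      rw [hs, one_mul] at this
      have hpos : 0 < (β - y) / (((cfQ w:ℝ) + cfQ' w * β) * ((cfQ w:ℝ) + cfQ' w * y)) :=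
        div_pos (by linarith) (mul_pos (cf_denom_pos hw hβ) (cf_denom_pos hw hy))
      linarith [this]
    exact Set.mem_uIoo_of_lt i1 i2
  · have hs : ((-1:ℝ))^w.length = -1 := ho.neg_one_pow
    have i1 : psiFun w y < psiFun w α := by
      have := psi_sub hw hy hα
      rw [hs] at this
      have hpos : 0 < (y - α) / (((cfQ w:ℝ) + cfQ' w * y) * ((cfQ w:ℝ) + cfQ' w * α)) :=
        div_pos (by linarith) (mul_pos (cf_denom_pos hw hy) (cf_denom_pos hw hα))
      have : psiFun w y - psiFun w α = -((y - α) / (((cfQ w:ℝ) + cfQ' w * y) * ((cfQ w:ℝ) + cfQ' w * α))) := by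
        rw [this]; ring
      linarith [this, hpos]
    have i2 : psiFun w β < psiFun w y := by
      have := psi_sub hw hβ hy
      rw [hs] at this
      have hpos : 0 < (β - y) / (((cfQ w:ℝ) + cfQ' w * β) * ((cfQ w:ℝ) + cfQ' w * y)) :=
        div_pos (by linarith) (mul_pos (cf_denom_pos hw hβ) (cf_denom_pos hw hy))
      have : psiFun w β - psiFun w y = -((β - y) / (((cfQ w:ℝ) + cfQ' w * β) * ((cfQ w:ℝ) + cfQ' w * y))) := by
        rw [this]; ring
      linarith [this, hpos]
    exact Set.mem_uIoo_of_gt i2 i1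

lemma psi_injOn {w : List ℕ} (hw : ∀ a ∈ w, 1 ≤ a) {u v : ℝ} (hu : 0 ≤ u) (hv : 0 ≤ v)
    (h : psiFun w u = psiFun w v) : u = v := by
  have := psi_sub hw hu hv
  rw [h, sub_self] at this
  have hden : (((cfQ w:ℝ) + cfQ' w * u) * ((cfQ w:ℝ) + cfQ' w * v)) ≠ 0 :=
    (mul_pos (cf_denom_pos hw hu) (cf_denom_pos hw hv)).ne'
  have hsg : ((-1:ℝ))^w.length ≠ 0 := by positivity
  have := (div_eq_zero_iff.mp this.symm).resolve_right hden
  have := (mul_eq_zero.mp this).resolve_left hsg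
  linarith

lemma psi_continuousOn {w : List ℕ} (hw : ∀ a ∈ w, 1 ≤ a) {s : Set ℝ} (hs : ∀ t ∈ s, 0 ≤ t) :
    ContinuousOn (psiFun w) s := by
  apply ContinuousOn.div
  · fun_prop
  · fun_prop
  · exact fun t ht => (cf_denom_pos hw (hs t ht)).ne'

lemma psi_rational {w : List ℕ} (hw : ∀ a ∈ w, 1 ≤ a) {y : ℝ} (hy : 0 ≤ y)
    (hyr : ¬ Irrational y) : ¬ Irrational (psiFun w y) := by
  rw [Irrational, not_not, Set.mem_range] at hyr ⊢
  obtain ⟨r, rfl⟩ := hyr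
  refine ⟨((cfP w + cfP' w * r) / (cfQ w + cfQ' w * r) : ℚ), ?_⟩
  rw [Rat.cast_div, psiFun]
  push_cast
  rfl

def IrrSet : Set ℝ := {x | Irrational x}

lemma irrSet_measurable : MeasurableSet IrrSet := by
  have : IrrSet = (Set.range ((↑) : ℚ → ℝ))ᶜ := rfl
  rw [this]
  exact (Set.countable_range _).measurableSet.compl

lemma irrSet_compl_null : volume IrrSetᶜ = 0 := by
  have : IrrSetᶜ = Set.range ((↑) : ℚ → ℝ) := by
    ext x; simp only [IrrSet, Irrational, Set.mem_compl_iff, Set.mem_setOf_eq, not_not]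
  rw [this]
  exact (Set.countable_range _).measure_zero _

lemma vol_uIoo_inter_irr (a b : ℝ) :
    volume (Set.uIoo a b ∩ IrrSet) = ENNReal.ofReal |b - a| := by
  rw [measure_inter_conull irrSet_compl_null, Set.uIoo, Real.volume_Ioo]
  congr 1
  rcases le_total a b with h | h
  · rw [abs_of_nonneg (by linarith), sup_eq_right.mpr h, inf_eq_left.mpr h]
  · rw [abs_of_nonpos (by linarith), sup_eq_left.mpr h, inf_eq_right.mpr h]; ring

/-- The fundamental cylinder set identity. -/
lemma cyl_eq {w : List ℕ} (hw : ∀ a ∈ w, 1 ≤ a) {α β : ℝ} (hα0 : 0 ≤ α) (hαβ : α < β)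
    (hβ1 : β ≤ 1) (hαr : ¬ Irrational α) (hβr : ¬ Irrational β) :
    {x | IrrI x ∧ digitWord x w.length = w ∧ gaussMap^[w.length] x ∈ Set.Ioo α β}
      = Set.uIoo (psiFun w α) (psiFun w β) ∩ IrrSet := by
  ext x
  constructor
  · rintro ⟨hx, hdw, hy1, hy2⟩
    obtain ⟨-, -, l3⟩ := D3 hx w.length
    rw [hdw] at l3
    refine ⟨?_, hx.1⟩
    have := psi_mem_uIoo hw hα0 hy1 hy2
    rwa [l3] at this
  · rintro ⟨hmem, hxirr⟩
    have hcont : ContinuousOn (psiFun w) (Set.uIcc α β) := by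
      apply psi_continuousOn hw
      intro t ht
      rw [Set.uIcc_of_le hαβ.le] at ht
      exact le_trans hα0 ht.1
    have hx' : x ∈ Set.uIcc (psiFun w α) (psiFun w β) := Set.uIoo_subset_uIcc_self hmem
    obtain ⟨y, hyIcc, hyx⟩ := intermediate_value_uIcc hcont hx'
    rw [Set.uIcc_of_le hαβ.le] at hyIcc
    have hy0 : 0 ≤ y := le_trans hα0 hyIcc.1
    have hyirr : Irrational y := by
      by_contra hc
      exact (psi_rational hw hy0 hc) (hyx ▸ hxirr)
    have hyα : y ≠ α := fun h => hαr (h ▸ hyirr)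
    have hyβ : y ≠ β := fun h => hβr (h ▸ hyirr)
    have hyI : IrrI y :=
      ⟨hyirr, hy0.lt_of_ne (Ne.symm hyirr.ne_zero),
        lt_of_le_of_ne (hyIcc.2.trans hβ1) hyirr.ne_one⟩
    obtain ⟨d1, d2, d3⟩ := D2 hw hyI
    rw [hyx] at d1 d2 d3
    exact ⟨d1, d3, by rw [d2]; exact ⟨lt_of_le_of_ne hyIcc.1 (Ne.symm hyα), lt_of_le_of_ne hyIcc.2 hyβ⟩⟩

/-- words of length n with all entries ≥ 1 -/
def Words (n : ℕ) := {w : List ℕ // w.length = n ∧ ∀ a ∈ w, 1 ≤ a}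

instance (n : ℕ) : Countable (Words n) := Subtype.countable

/-- cylinder for a word, as an interval intersected with irrationals -/
noncomputable def cylI {n : ℕ} (w : Words n) (α β : ℝ) : Set ℝ :=
  Set.uIoo (psiFun w.1 α) (psiFun w.1 β) ∩ IrrSet

lemma cylI_meas {n : ℕ} (w : Words n) (α β : ℝ) : MeasurableSet (cylI w α β) :=
  measurableSet_Ioo.inter irrSet_measurable

lemma cylI_eq {n : ℕ} (w : Words n) {α β : ℝ} (hα0 : 0 ≤ α) (hαβ : α < β) (hβ1 : β ≤ 1)
    (hαr : ¬ Irrational α) (hβr : ¬ Irrational β) :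
    cylI w α β = {x | IrrI x ∧ digitWord x n = w.1 ∧ gaussMap^[n] x ∈ Set.Ioo α β} := by
  rw [cylI, ← cyl_eq w.2.2 hα0 hαβ hβ1 hαr hβr, w.2.1]

lemma cylI_vol {n : ℕ} (w : Words n) {α β : ℝ} (hα0 : 0 ≤ α) (hβ0 : 0 ≤ β) :
    volume (cylI w α β)
      = ENNReal.ofReal (|β - α| /
          (((cfQ w.1:ℝ) + cfQ' w.1 * β) * ((cfQ w.1:ℝ) + cfQ' w.1 * α))) := by
  rw [cylI, vol_uIoo_inter_irr, ← psi_abs_sub w.2.2 hβ0 hα0]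

/-- full cylinder -/
lemma cylI_full_eq {n : ℕ} (w : Words n) :
    cylI w 0 1 = {x | IrrI x ∧ digitWord x n = w.1} := by
  rw [cylI_eq w le_rfl one_pos le_rfl not_irrational_zero not_irrational_one]
  ext x
  simp only [Set.mem_setOf_eq]
  exact ⟨fun ⟨h1, h2, _⟩ => ⟨h1, h2⟩, fun ⟨h1, h2⟩ => ⟨h1, h2, (irrI_gauss_iter h1 n).2⟩⟩

lemma cylI_full_vol {n : ℕ} (w : Words n) :
    volume (cylI w 0 1)
      = ENNReal.ofReal (1 / (((cfQ w.1:ℝ) + cfQ' w.1) * cfQ w.1)) := by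
  rw [cylI_vol w le_rfl zero_le_one]
  norm_num

/-- translation of the digit-size condition -/
lemma digit_ge_iff {x : ℝ} (hx : IrrI x) {n k : ℕ} (hk : 1 ≤ k) :
    k ≤ cfDigit x (n+1) ↔ gaussMap^[n] x < (k:ℝ)⁻¹ := by
  have hy := irrI_gauss_iter hx n
  have hy0 := hy.2.1
  have hk0 : (0:ℝ) < k := by exact_mod_cast hk
  have h1 : cfDigit x (n+1) = ⌊(gaussMap^[n] x)⁻¹⌋₊ := by rw [cfDigit]; norm_num
  rw [h1, Nat.le_floor_iff (by positivity)]
  constructor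
  · intro h
    have h2 : gaussMap^[n] x ≤ (k:ℝ)⁻¹ := by
      rw [← inv_inv (gaussMap^[n] x)]
      exact inv_anti₀ hk0 h
    rcases lt_or_eq_of_le h2 with h3 | h3
    · exact h3
    · exfalso
      have : Irrational ((k:ℝ)⁻¹) := h3 ▸ hy.1
      exact this.ne_rat k⁻¹ (by push_cast; ring)
  · intro h
    have := (inv_lt_inv₀ (by positivity) hy0).mpr h
    rw [inv_inv] at this
    exact this.le

lemma cyl_aux_pos {n : ℕ} (w : Words n) {c : ℝ} (hc : 0 ≤ c) :
    0 < (cfQ w.1:ℝ) + cfQ' w.1 * c := cf_denom_pos w.2.2 hc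

/-- per-cylinder upper bound for the tail event -/
lemma small_le {n : ℕ} (w : Words n) {k : ℕ} (hk : 1 ≤ k) :
    volume (cylI w 0 ((k:ℝ)⁻¹)) ≤ ENNReal.ofReal (2/k) * volume (cylI w 0 1) := by
  have hk0 : (0:ℝ) < k := by exact_mod_cast hk
  have hc0 : (0:ℝ) < (k:ℝ)⁻¹ := by positivity
  have hc1 : ((k:ℝ))⁻¹ ≤ 1 := by
    rw [inv_le_one_iff₀]; right; exact_mod_cast hk
  rw [cylI_vol w le_rfl hc0.le, cylI_full_vol w, ← ENNReal.ofReal_mul (by positivity)]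
  apply ENNReal.ofReal_le_ofReal
  have hq : (1:ℝ) ≤ (cfQ w.1 : ℝ) := by exact_mod_cast (cf_invariant w.2.2).1
  have hq'q : ((cfQ' w.1 : ℝ)) ≤ (cfQ w.1 : ℝ) := by exact_mod_cast (cf_invariant w.2.2).2.1
  set q : ℝ := (cfQ w.1 : ℝ) with hqdef
  set q' : ℝ := (cfQ' w.1 : ℝ) with hq'def
  have hq' : (0:ℝ) ≤ q' := by rw [hq'def]; positivity
  set c : ℝ := (k:ℝ)⁻¹ with hcdef
  have d1 : 0 < q + q' * c := cyl_aux_pos w hc0.le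
  have d2 : 0 < q + q' := by linarith
  have h2k : (2:ℝ)/k = 2 * c := by rw [hcdef, div_eq_mul_inv]
  rw [h2k, mul_zero, add_zero, abs_of_nonneg (by linarith), sub_zero, mul_one_div,
    div_le_div_iff₀ (by positivity) (by positivity)]
  have key : q + q' ≤ 2 * (q + q' * c) := by nlinarith
  nlinarith [mul_pos d1 (lt_of_lt_of_le one_pos hq), mul_pos hc0 (mul_pos d1 (lt_of_lt_of_le one_pos hq))]

/-- per-cylinder upper bound for the complement event -/
lemma kept_le {n : ℕ} (w : Words n) {k : ℕ} (hk : 1 ≤ k) :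
    volume (cylI w ((k:ℝ)⁻¹) 1) ≤ ENNReal.ofReal (1 - (k:ℝ)⁻¹) * volume (cylI w 0 1) := by
  have hk0 : (0:ℝ) < k := by exact_mod_cast hk
  have hc0 : (0:ℝ) < (k:ℝ)⁻¹ := by positivity
  have hc1 : ((k:ℝ))⁻¹ ≤ 1 := by
    rw [inv_le_one_iff₀]; right; exact_mod_cast hk
  rw [cylI_vol w hc0.le zero_le_one, cylI_full_vol w, ← ENNReal.ofReal_mul (by linarith)]
  apply ENNReal.ofReal_le_ofReal
  have hq : (1:ℝ) ≤ (cfQ w.1 : ℝ) := by exact_mod_cast (cf_invariant w.2.2).1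
  set q : ℝ := (cfQ w.1 : ℝ) with hqdef
  set q' : ℝ := (cfQ' w.1 : ℝ) with hq'def
  have hq' : (0:ℝ) ≤ q' := by rw [hq'def]; positivity
  set c : ℝ := (k:ℝ)⁻¹ with hcdef
  have d1 : 0 < q + q' * c := cyl_aux_pos w hc0.le
  have d2 : 0 < q + q' * 1 := cyl_aux_pos w zero_le_one
  rw [mul_one_div, abs_of_nonneg (by linarith), div_le_div_iff₀ (by positivity) (by positivity)]
  have h2 : (q + q') * q ≤ (q + q' * 1) * (q + q' * c) := by nlinarith [mul_nonneg d2.le (mul_nonneg hq' hc0.le)]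
  nlinarith [mul_le_mul_of_nonneg_left h2 (sub_nonneg.mpr hc1)]

/-- cylinders with distinct words are disjoint -/
lemma cyl_disjoint {n : ℕ} {α β : ℝ} (hα0 : 0 ≤ α) (hαβ : α < β) (hβ1 : β ≤ 1)
    (hαr : ¬ Irrational α) (hβr : ¬ Irrational β) :
    Pairwise (Function.onFun Disjoint (fun w : Words n => cylI w α β)) := by
  intro w w' hne
  rw [Function.onFun, Set.disjoint_left]
  intro x hx hx'
  rw [cylI_eq _ hα0 hαβ hβ1 hαr hβr] at hx hx'
  exact hne (Subtype.ext (hx.2.1.symm.trans hx'.2.1))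

lemma cyl_union_subset {n : ℕ} {α β : ℝ} (hα0 : 0 ≤ α) (hαβ : α < β) (hβ1 : β ≤ 1)
    (hαr : ¬ Irrational α) (hβr : ¬ Irrational β) :
    (⋃ w : Words n, cylI w α β) ⊆ Set.Ioo (0:ℝ) 1 := by
  intro x hx
  obtain ⟨w, hw⟩ := Set.mem_iUnion.mp hx
  rw [cylI_eq _ hα0 hαβ hβ1 hαr hβr] at hw
  exact ⟨hw.1.2.1, hw.1.2.2⟩

lemma inv_nat_not_irrational (k : ℕ) : ¬ Irrational ((k:ℝ)⁻¹) := by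
  intro h
  exact h.ne_rat (k:ℚ)⁻¹ (by push_cast; ring)

lemma inv_nat_pos {k : ℕ} (hk : 1 ≤ k) : (0:ℝ) < (k:ℝ)⁻¹ := by
  have : (0:ℝ) < k := by exact_mod_cast hk
  positivity

lemma inv_nat_le_one {k : ℕ} (hk : 1 ≤ k) : ((k:ℝ))⁻¹ ≤ 1 := by
  rw [inv_le_one_iff₀]; right; exact_mod_cast hk

/-- the event that the (n+1)-st digit is at least k -/
def bigSet (n k : ℕ) : Set ℝ := {x | IrrI x ∧ k ≤ cfDigit x (n+1)}

lemma bigSet_decomp {n k : ℕ} (hk : 1 ≤ k) :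
    bigSet n k = ⋃ w : Words n, cylI w 0 ((k:ℝ)⁻¹) := by
  have hc0 := inv_nat_pos hk
  have hc1 := inv_nat_le_one hk
  ext x
  rw [Set.mem_iUnion]
  constructor
  · rintro ⟨hx, hdig⟩
    obtain ⟨l1, l2, -⟩ := D3 hx n
    refine ⟨⟨digitWord x n, l1, l2⟩, ?_⟩
    refine (Set.ext_iff.mp (cylI_eq _ le_rfl hc0 hc1 not_irrational_zero (inv_nat_not_irrational k)) x).mpr ?_
    exact ⟨hx, rfl, (irrI_gauss_iter hx n).2.1, (digit_ge_iff hx hk).mp hdig⟩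
  · rintro ⟨w, hw⟩
    rw [cylI_eq _ le_rfl hc0 hc1 not_irrational_zero (inv_nat_not_irrational k)] at hw
    exact ⟨hw.1, (digit_ge_iff hw.1 hk).mpr hw.2.2.2⟩

lemma vol_cyl_union_le {n : ℕ} : ∑' w : Words n, volume (cylI w 0 1) ≤ 1 := by
  rw [← measure_iUnion (cyl_disjoint le_rfl one_pos le_rfl not_irrational_zero not_irrational_one)
    (fun w => cylI_meas w 0 1)]
  calc volume (⋃ w : Words n, cylI w 0 1)
      ≤ volume (Set.Ioo (0:ℝ) 1) := measure_mono
        (cyl_union_subset le_rfl one_pos le_rfl not_irrational_zero not_irrational_one)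
    _ = 1 := by rw [Real.volume_Ioo]; norm_num

lemma vol_bigSet {n k : ℕ} (hk : 1 ≤ k) :
    volume (bigSet n k) ≤ ENNReal.ofReal (2/k) := by
  have hc0 := inv_nat_pos hk
  have hc1 := inv_nat_le_one hk
  rw [bigSet_decomp hk,
    measure_iUnion (cyl_disjoint le_rfl hc0 hc1 not_irrational_zero (inv_nat_not_irrational k))
      (fun w => cylI_meas w _ _)]
  calc ∑' w : Words n, volume (cylI w 0 ((k:ℝ)⁻¹))
      ≤ ∑' w : Words n, ENNReal.ofReal (2/k) * volume (cylI w 0 1) :=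
        ENNReal.tsum_le_tsum (fun w => small_le w hk)
    _ = ENNReal.ofReal (2/k) * ∑' w : Words n, volume (cylI w 0 1) := ENNReal.tsum_mul_left
    _ ≤ ENNReal.ofReal (2/k) * 1 := mul_le_mul_right vol_cyl_union_le _
    _ = ENNReal.ofReal (2/k) := mul_one _

/-- the set of points whose digits m for n0 < m ≤ N are all < m -/
def goodSet (n0 N : ℕ) : Set ℝ := {x | IrrI x ∧ ∀ m, n0 < m → m ≤ N → cfDigit x m < m}

def GWords (n0 N : ℕ) := {w : Words N // ∀ m, n0 < m → m ≤ N → w.1.getD (m-1) 0 < m}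

instance (n0 N : ℕ) : Countable (GWords n0 N) := Subtype.countable

lemma goodSet_decomp (n0 N : ℕ) :
    goodSet n0 N = ⋃ w : GWords n0 N, cylI w.1 0 1 := by
  ext x
  rw [Set.mem_iUnion]
  constructor
  · rintro ⟨hx, hdig⟩
    obtain ⟨l1, l2, -⟩ := D3 hx N
    refine ⟨⟨⟨digitWord x N, l1, l2⟩, ?_⟩, ?_⟩
    · intro m h1 h2
      rw [digitWord_getD (n := N) (by omega), show m - 1 + 1 = m by omega]
      exact hdig m h1 h2
    · rw [cylI_full_eq]
      exact ⟨hx, rfl⟩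
  · rintro ⟨w, hw⟩
    rw [cylI_full_eq] at hw
    refine ⟨hw.1, fun m h1 h2 => ?_⟩
    have := w.2 m h1 h2
    rwa [← hw.2, digitWord_getD (n := N) (by omega), show m - 1 + 1 = m by omega] at this

lemma goodSet_succ_decomp {n0 N : ℕ} (hN : 1 ≤ N) (hn0N : n0 ≤ N) :
    goodSet n0 (N+1) = ⋃ w : GWords n0 N, cylI w.1 (((N+1:ℕ):ℝ)⁻¹) 1 := by
  have hc0 := inv_nat_pos (show 1 ≤ N+1 by omega)
  have hc1 : (((N+1:ℕ):ℝ))⁻¹ < 1 := by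
    rw [inv_lt_one_iff₀]; right; exact_mod_cast (by omega : 1 < N+1)
  ext x
  rw [Set.mem_iUnion]
  constructor
  · rintro ⟨hx, hdig⟩
    obtain ⟨l1, l2, -⟩ := D3 hx N
    refine ⟨⟨⟨digitWord x N, l1, l2⟩, ?_⟩, ?_⟩
    · intro m h1 h2
      rw [digitWord_getD (n := N) (by omega), show m - 1 + 1 = m by omega]
      exact hdig m h1 (by omega)
    · rw [cylI_eq _ hc0.le hc1 le_rfl (inv_nat_not_irrational (N+1)) not_irrational_one]
      refine ⟨hx, rfl, ?_, (irrI_gauss_iter hx N).2.2⟩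
      have hnot : ¬ (N+1 ≤ cfDigit x (N+1)) := by
        have := hdig (N+1) (by omega) le_rfl
        omega
      rw [digit_ge_iff hx (by omega)] at hnot
      push_neg at hnot
      rcases lt_or_eq_of_le hnot with h | h
      · exact h
      · exact absurd h.symm (fun hc => inv_nat_not_irrational (N+1) (hc ▸ (irrI_gauss_iter hx N).1))
  · rintro ⟨w, hw⟩
    rw [cylI_eq _ hc0.le hc1 le_rfl (inv_nat_not_irrational (N+1)) not_irrational_one] at hw
    obtain ⟨hx, hdw, hy1, hy2⟩ := hw
    refine ⟨hx, fun m h1 h2 => ?_⟩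
    rcases Nat.lt_or_ge m (N+1) with h | h
    · have := w.2 m h1 (by omega)
      rwa [← hdw, digitWord_getD (n := N) (by omega), show m - 1 + 1 = m by omega] at this
    · have hm : m = N + 1 := by omega
      subst hm
      have : ¬ ((N+1) ≤ cfDigit x (N+1)) := by
        rw [digit_ge_iff hx (by omega)]
        push_neg
        exact hy1.le
      omega

lemma gwords_disjoint (n0 N : ℕ) {α β : ℝ} (hα0 : 0 ≤ α) (hαβ : α < β) (hβ1 : β ≤ 1)
    (hαr : ¬ Irrational α) (hβr : ¬ Irrational β) :
    Pairwise (Function.onFun Disjoint (fun w : GWords n0 N => cylI w.1 α β)) := by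
  intro w w' hne
  exact cyl_disjoint hα0 hαβ hβ1 hαr hβr (fun h : w.1 = w'.1 => hne (Subtype.ext h))

lemma vol_goodSet_succ {n0 N : ℕ} (hN : 1 ≤ N) (hn0N : n0 ≤ N) :
    volume (goodSet n0 (N+1))
      ≤ ENNReal.ofReal (1 - (((N+1:ℕ)):ℝ)⁻¹) * volume (goodSet n0 N) := by
  have hc0 := inv_nat_pos (show 1 ≤ N+1 by omega)
  have hc1 : ((((N+1:ℕ)):ℝ))⁻¹ ≤ 1 := inv_nat_le_one (by omega)
  rw [goodSet_succ_decomp hN hn0N, goodSet_decomp n0 N,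
    measure_iUnion (gwords_disjoint n0 N hc0.le (by
      rw [inv_lt_one_iff₀]; right; exact_mod_cast (by omega : 1 < N+1)) le_rfl
      (inv_nat_not_irrational (N+1)) not_irrational_one) (fun w => cylI_meas w.1 _ _),
    measure_iUnion (gwords_disjoint n0 N le_rfl one_pos le_rfl not_irrational_zero
      not_irrational_one) (fun w => cylI_meas w.1 _ _)]
  calc ∑' w : GWords n0 N, volume (cylI w.1 (((N+1:ℕ):ℝ))⁻¹ 1)
      ≤ ∑' w : GWords n0 N, ENNReal.ofReal (1 - (((N+1:ℕ)):ℝ)⁻¹) * volume (cylI w.1 0 1) :=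
        ENNReal.tsum_le_tsum (fun w => kept_le w.1 (by omega))
    _ = ENNReal.ofReal (1 - (((N+1:ℕ)):ℝ)⁻¹) * ∑' w : GWords n0 N, volume (cylI w.1 0 1) :=
        ENNReal.tsum_mul_left

lemma vol_goodSet {n0 : ℕ} (hn0 : 1 ≤ n0) :
    ∀ N, n0 ≤ N → volume (goodSet n0 N) ≤ ENNReal.ofReal ((n0:ℝ) / N) := by
  refine Nat.le_induction ?_ ?_
  · have h1 : goodSet n0 n0 ⊆ Set.Ioo (0:ℝ) 1 := fun x hx => ⟨hx.1.2.1, hx.1.2.2⟩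
    calc volume (goodSet n0 n0) ≤ volume (Set.Ioo (0:ℝ) 1) := measure_mono h1
      _ = 1 := by rw [Real.volume_Ioo]; norm_num
      _ ≤ ENNReal.ofReal ((n0:ℝ) / n0) := by
          have : (n0:ℝ) / n0 = 1 := div_self (by positivity)
          rw [this]; simp
  · intro N hN ih
    have hN1 : 1 ≤ N := le_trans hn0 hN
    have hNr : (1:ℝ) ≤ N := by exact_mod_cast hN1
    calc volume (goodSet n0 (N+1))
        ≤ ENNReal.ofReal (1 - (((N+1:ℕ)):ℝ)⁻¹) * volume (goodSet n0 N) :=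
          vol_goodSet_succ hN1 hN
      _ ≤ ENNReal.ofReal (1 - (((N+1:ℕ)):ℝ)⁻¹) * ENNReal.ofReal ((n0:ℝ) / N) :=
          mul_le_mul_right ih _
      _ = ENNReal.ofReal ((1 - (((N+1:ℕ)):ℝ)⁻¹) * ((n0:ℝ) / N)) :=
          (ENNReal.ofReal_mul (by
            have := inv_nat_le_one (show 1 ≤ N+1 by omega); linarith)).symm
      _ = ENNReal.ofReal ((n0:ℝ) / ((N:ℕ)+1:ℕ)) := by
          congr 1
          have hN0 : (N:ℝ) ≠ 0 := by positivity
          have hN10 : ((N:ℝ)+1) ≠ 0 := by positivity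
          push_cast
          field_simp
          ring

def badSet (n0 : ℕ) : Set ℝ := {x | IrrI x ∧ ∀ m, n0 < m → cfDigit x m < m}

lemma badSet_null {n0 : ℕ} (hn0 : 1 ≤ n0) : volume (badSet n0) = 0 := by
  have hsub : ∀ N, n0 ≤ N → badSet n0 ⊆ goodSet n0 N :=
    fun N _ x hx => ⟨hx.1, fun m h1 _ => hx.2 m h1⟩
  have hle : ∀ᶠ N : ℕ in atTop, volume (badSet n0) ≤ ENNReal.ofReal ((n0:ℝ) / N) := by
    filter_upwards [eventually_ge_atTop n0] with N hN
    exact le_trans (measure_mono (hsub N hN)) (vol_goodSet hn0 N hN)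
  have htend : Tendsto (fun N : ℕ => ENNReal.ofReal ((n0:ℝ) / N)) atTop (nhds 0) := by
    have := ENNReal.tendsto_ofReal (tendsto_const_div_atTop_nhds_zero_nat (n0:ℝ))
    simpa using this
  exact le_antisymm (ge_of_tendsto htend hle) zero_le

/-- Borel-Cantelli side -/
lemma vol_limsup_big {ε : ℝ} (hε : 0 < ε) :
    volume (limsup (fun n : ℕ => bigSet n (⌈(((n+1:ℕ)):ℝ) ^ (1+ε)⌉₊)) atTop) = 0 := by
  apply measure_limsup_atTop_eq_zero
  apply LT.lt.ne
  have hr : ∀ n : ℕ, (1:ℝ) ≤ (((n+1:ℕ)):ℝ) ^ (1+ε) := by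
    intro n
    apply Real.one_le_rpow (by push_cast; linarith) (by linarith)
  have hk1 : ∀ n : ℕ, 1 ≤ ⌈(((n+1:ℕ)):ℝ) ^ (1+ε)⌉₊ := by
    intro n
    rw [Nat.one_le_iff_ne_zero, ← Nat.pos_iff_ne_zero, Nat.ceil_pos]
    linarith [hr n]
  have hbound : ∀ n : ℕ, volume (bigSet n (⌈(((n+1:ℕ)):ℝ) ^ (1+ε)⌉₊))
      ≤ ENNReal.ofReal (2 / (((n+1:ℕ)):ℝ) ^ (1+ε)) := by
    intro n
    refine le_trans (vol_bigSet (hk1 n)) (ENNReal.ofReal_le_ofReal ?_)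
    apply div_le_div_of_nonneg_left (by norm_num) (by linarith [hr n])
    exact Nat.le_ceil _
  have hsum : Summable (fun n : ℕ => 2 / (((n+1:ℕ)):ℝ) ^ (1+ε)) := by
    have h0 : Summable (fun n : ℕ => 1 / ((n:ℝ)) ^ (1+ε)) :=
      Real.summable_one_div_nat_rpow.mpr (by linarith)
    have h1 : Summable (fun n : ℕ => 1 / (((n+1:ℕ)):ℝ) ^ (1+ε)) := by
      have := (summable_nat_add_iff 1).mpr h0
      simpa using this
    simpa [div_eq_mul_inv, two_mul] using h1.add h1
  calc ∑' n, volume (bigSet n (⌈(((n+1:ℕ)):ℝ) ^ (1+ε)⌉₊))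
      ≤ ∑' n, ENNReal.ofReal (2 / (((n+1:ℕ)):ℝ) ^ (1+ε)) := ENNReal.tsum_le_tsum hbound
    _ = ENNReal.ofReal (∑' n, 2 / (((n+1:ℕ)):ℝ) ^ (1+ε)) :=
        (ENNReal.ofReal_tsum_of_nonneg (fun n => by positivity) hsum).symm
    _ < ⊤ := ENNReal.ofReal_lt_top

lemma pointwise_limsup {x : ℝ} (hx : IrrI x)
    (hup : ∀ j : ℕ, ∀ᶠ n in atTop,
      (cfDigit x (n+1) : ℝ) < (((n+1:ℕ)):ℝ) ^ (1 + (1/(j+1) : ℝ)))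
    (hlow : ∀ n0 : ℕ, 1 ≤ n0 → ∃ m, n0 < m ∧ m ≤ cfDigit x m) :
    limsup (fun n : ℕ => Real.log (cfDigit x n) / Real.log n) atTop = 1 := by
  set f : ℕ → ℝ := fun n => Real.log (cfDigit x n) / Real.log n with hf
  have hUB : ∀ j : ℕ, ∀ᶠ m in atTop, f m ≤ 1 + (1/(j+1) : ℝ) := by
    intro j
    obtain ⟨M, hM⟩ := eventually_atTop.mp (hup j)
    rw [eventually_atTop]
    refine ⟨M + 2, fun m hm => ?_⟩
    have hm2 : 2 ≤ m := by omega
    have hkey := hM (m-1) (by omega)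
    rw [show m - 1 + 1 = m by omega] at hkey
    have hm1 : (1:ℝ) < m := by exact_mod_cast hm2
    have hlogm : 0 < Real.log m := Real.log_pos hm1
    have hd1' : (0:ℝ) < cfDigit x m := by exact_mod_cast cfDigit_pos hx m
    have hlog : Real.log (cfDigit x m) ≤ (1 + (1/(j+1):ℝ)) * Real.log m := by
      calc Real.log (cfDigit x m) ≤ Real.log ((m:ℝ) ^ (1 + (1/(j+1):ℝ))) :=
            Real.log_le_log hd1' hkey.le
        _ = (1 + (1/(j+1):ℝ)) * Real.log m := Real.log_rpow (by linarith) _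
    exact (div_le_iff₀ hlogm).mpr hlog
  have hLB : ∃ᶠ m in atTop, (1:ℝ) ≤ f m := by
    rw [frequently_atTop]
    intro b
    obtain ⟨m, hm1, hm2⟩ := hlow (max b 1) (le_max_right _ _)
    have hmb : b ≤ m := le_trans (le_max_left b 1) hm1.le
    have hm2' : 2 ≤ m := by
      have := le_max_right b 1
      omega
    have hm1' : (1:ℝ) < m := by exact_mod_cast hm2'
    have hlogm : 0 < Real.log m := Real.log_pos hm1'
    have hdm : (m:ℝ) ≤ cfDigit x m := by exact_mod_cast hm2
    have : Real.log m ≤ Real.log (cfDigit x m) := Real.log_le_log (by linarith) hdm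
    exact ⟨m, hmb, (le_div_iff₀ hlogm).mpr (by linarith)⟩
  have hBdd : IsBoundedUnder (· ≤ ·) atTop f :=
    isBoundedUnder_of_eventually_le (a := 2) ((hUB 0).mono (fun m h => by norm_num at h ⊢; linarith))
  have hCob : IsCoboundedUnder (· ≤ ·) atTop f := IsCoboundedUnder.of_frequently_ge hLB
  have h1 : (1:ℝ) ≤ limsup f atTop := le_limsup_of_frequently_le hLB hBdd
  have h2 : limsup f atTop ≤ 1 := by
    by_contra hcon
    push_neg at hcon
    obtain ⟨j, hj⟩ := exists_nat_one_div_lt (show (0:ℝ) < limsup f atTop - 1 by linarith)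
    have := limsup_le_of_le hCob (hUB j)
    linarith
  linarith


/-- For Lebesgue almost every x ∈ [0,1), limsup (log a_n(x))/(log n) = 1. -/
theorem limsup_log_digit_div_log_n :
    ∀ᵐ x ∂(volume.restrict (Set.Ico (0 : ℝ) 1)),
      limsup (fun n : ℕ => Real.log (cfDigit x n : ℝ) / Real.log (n : ℝ)) atTop = 1 := by
  have hres : ∀ {p : ℝ → Prop}, (∀ᵐ x ∂(volume : Measure ℝ), p x) →
      (∀ᵐ x ∂(volume.restrict (Set.Ico (0:ℝ) 1)), p x) :=
    fun h => h.filter_mono (ae_mono Measure.restrict_le_self)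
  have hIrr : ∀ᵐ x ∂(volume : Measure ℝ), Irrational x := by
    rw [ae_iff]
    exact irrSet_compl_null
  have hup : ∀ᵐ x ∂(volume : Measure ℝ), ∀ j : ℕ,
      ∀ᶠ n in atTop, x ∉ bigSet n (⌈(((n+1:ℕ)):ℝ) ^ (1 + (1/(j+1) : ℝ))⌉₊) := by
    rw [ae_all_iff]
    intro j
    have h0 : (0:ℝ) < 1/(j+1 : ℝ) := by positivity
    have hnull := vol_limsup_big h0
    rw [ae_iff]
    refine measure_mono_null ?_ hnull
    intro x hxmem
    simp only [Set.mem_setOf_eq, Filter.not_eventually, not_not] at hxmem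
    exact mem_limsup_iff_frequently_mem.mpr hxmem
  have hlow : ∀ᵐ x ∂(volume : Measure ℝ), ∀ n0 : ℕ, x ∉ badSet (n0 + 1) := by
    rw [ae_all_iff]
    intro n0
    rw [ae_iff]
    refine measure_mono_null ?_ (badSet_null (show 1 ≤ n0 + 1 by omega))
    intro x hxmem
    simpa using hxmem
  filter_upwards [hres hIrr, hres hup, hres hlow, ae_restrict_mem measurableSet_Ico]
    with x hxirr hxup hxlow hxmem
  have hxI : IrrI x := ⟨hxirr, lt_of_le_of_ne hxmem.1 (Ne.symm hxirr.ne_zero), hxmem.2⟩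
  apply pointwise_limsup hxI
  · intro j
    refine (hxup j).mono (fun n hn => ?_)
    rw [bigSet] at hn
    simp only [Set.mem_setOf_eq, not_and] at hn
    have := hn hxI
    rw [not_le] at this
    exact_mod_cast Nat.lt_ceil.mp this
  · intro n0 hn0
    have hx' := hxlow (n0 - 1)
    rw [show n0 - 1 + 1 = n0 by omega] at hx'
    rw [badSet] at hx'
    simp only [Set.mem_setOf_eq, not_and, not_forall, not_lt] at hx'
    obtain ⟨m, hm1, hm2⟩ := hx' hxI
    exact ⟨m, hm1, hm2⟩
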